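/- Let T > 0, κ > 0, φ > 0 and Λ₀, E₀ ∈ ℝ with Λ₀·√κ − √φ·E₀ ≠ 0. Set γ := √(φ/κ) and β := (Λ₀·√κ + √φ·E₀)/(Λ₀·√κ − √φ·E₀), and assume β·e^{2γu} + 1 ≠ 0 for every u ∈ [0,T]. Define g(u) := γ·(β·e^{2γu} − 1)/(β·e^{2γu} + 1) and Λ(t) := Λ₀·e^{∫₀ᵗ g(u)du} for t ∈ [0,T]. Then Λ is twice differentiable on [0,T] and satisfies κ·Λ″(t) = φ·Λ(t) for every t ∈ [0,T], with Λ(0) = Λ₀ and Λ′(0) = φ·E₀/κ. -/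

import Mathlib

/-- The closed-form order flow Λ(t) = Λ₀·e^{∫₀ᵗ g(u)du}, with
g(u) = γ(βe^{2γu} − 1)/(βe^{2γu} + 1), solves κΛ″ = φΛ on [0,T] with
Λ(0) = Λ₀ and Λ′(0) = φE₀/κ. -/
theorem stmt_7 (T κ φ Λ₀ E₀ : ℝ) (hT : 0 < T) (hκ : 0 < κ) (hφ : 0 < φ)
    (hne : Λ₀ * Real.sqrt κ - Real.sqrt φ * E₀ ≠ 0)
    (γ β : ℝ) (hγ : γ = Real.sqrt (φ / κ))
    (hβ : β = (Λ₀ * Real.sqrt κ + Real.sqrt φ * E₀) / (Λ₀ * Real.sqrt κ - Real.sqrt φ * E₀))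
    (hden : ∀ u ∈ Set.Icc (0:ℝ) T, β * Real.exp (2 * γ * u) + 1 ≠ 0)
    (g Λ : ℝ → ℝ)
    (hg : ∀ u, g u = γ * (β * Real.exp (2 * γ * u) - 1) / (β * Real.exp (2 * γ * u) + 1))
    (hΛ : ∀ t, Λ t = Λ₀ * Real.exp (∫ u in (0:ℝ)..t, g u)) :
    ∃ Λ' Λ'' : ℝ → ℝ,
      (∀ t ∈ Set.Icc (0:ℝ) T, HasDerivWithinAt Λ (Λ' t) (Set.Icc (0:ℝ) T) t) ∧
      (∀ t ∈ Set.Icc (0:ℝ) T, HasDerivWithinAt Λ' (Λ'' t) (Set.Icc (0:ℝ) T) t) ∧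
      (∀ t ∈ Set.Icc (0:ℝ) T, κ * Λ'' t = φ * Λ t) ∧
      Λ 0 = Λ₀ ∧ Λ' 0 = φ * E₀ / κ := by
  have h0T : (0:ℝ) ∈ Set.Icc (0:ℝ) T := ⟨le_refl 0, hT.le⟩
  -- continuity of g on Icc 0 T
  have hgcont : ContinuousOn g (Set.Icc (0:ℝ) T) := by
    have : ContinuousOn (fun u => γ * (β * Real.exp (2 * γ * u) - 1) /
        (β * Real.exp (2 * γ * u) + 1)) (Set.Icc (0:ℝ) T) :=
      ContinuousOn.div (by fun_prop) (by fun_prop) hden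
    exact this.congr (fun u _ => hg u)
  have hint : ∀ t ∈ Set.Icc (0:ℝ) T, IntervalIntegrable g MeasureTheory.volume 0 t := by
    intro t ht
    apply ContinuousOn.intervalIntegrable
    apply hgcont.mono
    rw [Set.uIcc_of_le ht.1]
    exact Set.Icc_subset_Icc le_rfl ht.2
  -- FTC: derivative of F within Icc
  have hF : ∀ t ∈ Set.Icc (0:ℝ) T,
      HasDerivWithinAt (fun t => ∫ u in (0:ℝ)..t, g u) (g t) (Set.Icc (0:ℝ) T) t := by
    intro t ht
    haveI : Fact (t ∈ Set.Icc (0:ℝ) T) := ⟨ht⟩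
    exact intervalIntegral.integral_hasDerivWithinAt_right (hint t ht)
      ⟨Set.Icc (0:ℝ) T, self_mem_nhdsWithin,
        hgcont.aestronglyMeasurable measurableSet_Icc⟩
      (hgcont.continuousWithinAt ht)
  have hD1 : ∀ t ∈ Set.Icc (0:ℝ) T, HasDerivWithinAt Λ (Λ t * g t) (Set.Icc (0:ℝ) T) t := by
    intro t ht
    have h2 := ((hF t ht).exp).const_mul Λ₀
    have hΛfun : Λ = fun t => Λ₀ * Real.exp (∫ u in (0:ℝ)..t, g u) := funext hΛ
    rw [hΛfun]
    refine h2.congr_deriv ?_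
    simp [hΛ t]; ring
  -- derivative of g
  have hγ2 : γ ^ 2 = φ / κ := by
    rw [hγ]; exact Real.sq_sqrt (div_nonneg hφ.le hκ.le)
  have hgderiv : ∀ t ∈ Set.Icc (0:ℝ) T,
      HasDerivAt g (4 * γ ^ 2 * β * Real.exp (2 * γ * t) /
        (β * Real.exp (2 * γ * t) + 1) ^ 2) t := by
    intro t ht
    have hgfun : g = fun u => γ * (β * Real.exp (2 * γ * u) - 1) /
        (β * Real.exp (2 * γ * u) + 1) := funext hg
    rw [hgfun]
    have he : HasDerivAt (fun u : ℝ => Real.exp (2 * γ * u)) (Real.exp (2 * γ * t) * (2 * γ)) t := by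
      simpa using ((hasDerivAt_id t).const_mul (2 * γ)).exp
    have hnum : HasDerivAt (fun u : ℝ => γ * (β * Real.exp (2 * γ * u) - 1))
        (γ * (β * (Real.exp (2 * γ * t) * (2 * γ)))) t :=
      ((he.const_mul β).sub_const 1).const_mul γ
    have hden' : HasDerivAt (fun u : ℝ => β * Real.exp (2 * γ * u) + 1)
        (β * (Real.exp (2 * γ * t) * (2 * γ))) t := (he.const_mul β).add_const 1
    have := hnum.div hden' (hden t ht)
    refine this.congr_deriv ?_
    rw [div_eq_div_iff (pow_ne_zero 2 (hden t ht)) (pow_ne_zero 2 (hden t ht))]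
    ring
  have hD2 : ∀ t ∈ Set.Icc (0:ℝ) T,
      HasDerivWithinAt (fun t => Λ t * g t) (Λ t * γ ^ 2) (Set.Icc (0:ℝ) T) t := by
    intro t ht
    have := (hD1 t ht).mul ((hgderiv t ht).hasDerivWithinAt)
    refine this.congr_deriv ?_
    rw [hg t]
    have hd := hden t ht
    field_simp
    have hd2 : β * Real.exp (γ * 2 * t) + 1 ≠ 0 := by rwa [mul_comm γ 2]
    rw [div_eq_iff (pow_ne_zero 2 hd2)]
    ring
  refine ⟨fun t => Λ t * g t, fun t => Λ t * γ ^ 2, hD1, hD2, ?_, ?_, ?_⟩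
  · intro t ht
    rw [hγ2]
    field_simp
  · simp [hΛ 0]
  · -- Λ 0 * g 0 = φ * E₀ / κ
    have hΛ0 : Λ 0 = Λ₀ := by simp [hΛ 0]
    have hb1 : β + 1 ≠ 0 := by
      have := hden 0 h0T
      simpa using this
    have hsκ : (0:ℝ) < Real.sqrt κ := Real.sqrt_pos.2 hκ
    have hsφ : (0:ℝ) < Real.sqrt φ := Real.sqrt_pos.2 hφ
    have hA : Λ₀ * Real.sqrt κ ≠ 0 := by
      intro h
      have hB : Real.sqrt φ * E₀ ≠ 0 := by
        intro hB; exact hne (by rw [h, hB]; ring)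
      apply hb1
      rw [hβ, h, zero_sub, zero_add, div_neg, div_self hB]
      ring
    have hγ' : γ = Real.sqrt φ / Real.sqrt κ := by
      rw [hγ, Real.sqrt_div hφ.le]
    have hκ2 : Real.sqrt κ * Real.sqrt κ = κ := Real.mul_self_sqrt hκ.le
    have hφ2 : Real.sqrt φ * Real.sqrt φ = φ := Real.mul_self_sqrt hφ.le
    have hΛ₀ : Λ₀ ≠ 0 := fun h => hA (by rw [h]; ring)
    have hβ1 : β - 1 = 2 * (Real.sqrt φ * E₀) / (Λ₀ * Real.sqrt κ - Real.sqrt φ * E₀) := by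
      rw [hβ]; field_simp; ring
    have hβ2 : β + 1 = 2 * (Λ₀ * Real.sqrt κ) / (Λ₀ * Real.sqrt κ - Real.sqrt φ * E₀) := by
      rw [hβ]; field_simp; ring
    have key : γ * (β - 1) / (β + 1) = Real.sqrt φ * E₀ * γ / (Λ₀ * Real.sqrt κ) := by
      rw [hβ1, hβ2]
      field_simp
    show Λ 0 * g 0 = φ * E₀ / κ
    rw [hg 0, hΛ0]
    simp only [mul_zero, Real.exp_zero, mul_one]
    rw [key, hγ']
    field_simp
    linear_combination (E₀ * κ) * hφ2 - (E₀ * φ) * hκ2
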